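/- (Fermat's rule at infinity.) Let F : ℝ^n ⇉ ℝ^m be a set-valued mapping with closed graph, K ⊊ ℝ^m a pointed closed convex cone with nonempty interior, and Ω ⊆ ℝ^n an unbounded closed set. Let ȳ ∈ cl F(Ω) \ F(Ω) be a weak efficient value for the problem of minimizing F over Ω with respect to K, i.e., (ȳ − int K) ∩ F(Ω) = ∅. Assume the constraint qualification at infinity D*F(∞, ȳ)(0) ∩ (−N_Ω(∞)) = {0}. Then there exists a vector c* ∈ K⁺ with c* ≠ 0 such that 0 ∈ D*F(∞, ȳ)(c*) + N_Ω(∞). -/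

import Mathlib

open Filter Topology Set Metric Pointwise
open scoped RealInnerProductSpace ENNReal

noncomputable section

variable {E F G : Type*}
  [NormedAddCommGroup E] [InnerProductSpace ℝ E]
  [NormedAddCommGroup F] [InnerProductSpace ℝ F]
  [NormedAddCommGroup G] [InnerProductSpace ℝ G]

/-- The regular (Fréchet) normal cone to a subset of a product of inner product
spaces, at a point `p` (empty if `p ∉ Ω`). -/
def frechetNormalCone2 (Ω : Set (E × F)) (p : E × F) : Set (E × F) :=
  {ξ | p ∈ Ω ∧ ∀ ε > (0:ℝ), ∀ᶠ q in nhdsWithin p Ω,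
      ⟪ξ.1, q.1 - p.1⟫ + ⟪ξ.2, q.2 - p.2⟫ ≤ ε * ‖q - p‖}

/-- The limiting (Mordukhovich) normal cone. -/
def limitingNormalCone2 (Ω : Set (E × F)) (p : E × F) : Set (E × F) :=
  {ξ | ∃ pk : ℕ → E × F, ∃ ξk : ℕ → E × F,
    (∀ k, pk k ∈ Ω) ∧ Tendsto pk atTop (𝓝 p) ∧
    (∀ k, ξk k ∈ frechetNormalCone2 Ω (pk k)) ∧ Tendsto ξk atTop (𝓝 ξ)}

/-- The normal cone to `Ω ⊆ E × F` at `(∞, ȳ)`. -/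
def normalConeAtInfty (Ω : Set (E × F)) (ybar : F) : Set (E × F) :=
  {ξ | ∃ pk : ℕ → E × F, ∃ ξk : ℕ → E × F,
    (∀ k, pk k ∈ Ω) ∧ Tendsto (fun k => ‖(pk k).1‖) atTop atTop ∧
    Tendsto (fun k => (pk k).2) atTop (𝓝 ybar) ∧
    (∀ k, ξk k ∈ frechetNormalCone2 Ω (pk k)) ∧ Tendsto ξk atTop (𝓝 ξ)}

/-- `Ω ⊆ E × F` is locally closed at `(∞, ȳ)`. -/
def LocallyClosedAtInfty (Ω : Set (E × F)) (ybar : F) : Prop :=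
  ∃ R > (0:ℝ), ∃ V ∈ 𝓝 ybar, IsClosed V ∧
    IsClosed (Ω ∩ {p : E × F | R ≤ ‖p.1‖ ∧ p.2 ∈ V})

/-- Graph of a set-valued mapping. -/
def svGraph (S : E → Set F) : Set (E × F) := {p | p.2 ∈ S p.1}

/-- Jelonek set of a set-valued mapping. -/
def jelonek (S : E → Set F) : Set F :=
  {y | ∃ xk : ℕ → E, ∃ yk : ℕ → F,
    Tendsto (fun k => ‖xk k‖) atTop atTop ∧ (∀ k, yk k ∈ S (xk k)) ∧
    Tendsto yk atTop (𝓝 y)}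

/-- Coderivative of a set-valued mapping at a point of its graph. -/
def coderiv (S : E → Set F) (x : E) (y : F) (v : F) : Set E :=
  {u | (u, -v) ∈ limitingNormalCone2 (svGraph S) (x, y)}

/-- Coderivative of a set-valued mapping at `(∞, ȳ)`. -/
def coderivAtInfty (S : E → Set F) (ybar : F) (v : F) : Set E :=
  {u | (u, -v) ∈ normalConeAtInfty (svGraph S) ybar}

/-- Regular normal cone, one-space version. -/
def frechetNormalCone1 (Ω : Set E) (x : E) : Set E :=
  {ξ | x ∈ Ω ∧ ∀ ε > (0:ℝ), ∀ᶠ x' in nhdsWithin x Ω, ⟪ξ, x' - x⟫ ≤ ε * ‖x' - x‖}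

/-- Normal cone at infinity to an unbounded subset of `E`. -/
def normalConeAtInfty1 (Ω : Set E) : Set E :=
  {ξ | ∃ xk : ℕ → E, ∃ ξk : ℕ → E, (∀ k, xk k ∈ Ω) ∧
    Tendsto (fun k => ‖xk k‖) atTop atTop ∧
    (∀ k, ξk k ∈ frechetNormalCone1 Ω (xk k)) ∧ Tendsto ξk atTop (𝓝 ξ)}

/-- Epigraph of an extended-real-valued function. -/
def epiSet (f : E → EReal) : Set (E × ℝ) := {p | f p.1 ≤ (p.2 : EReal)}

/-- Graph of an extended-real-valued function, as a subset of `E × ℝ`. -/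
def gphFun (f : E → EReal) : Set (E × ℝ) := {p | f p.1 = (p.2 : EReal)}

/-- Jelonek set of a function. -/
def jelonekFun (f : E → EReal) : Set ℝ :=
  {y | ∃ xk : ℕ → E, Tendsto (fun k => ‖xk k‖) atTop atTop ∧
    Tendsto (fun k => f (xk k)) atTop (𝓝 (y : EReal))}

/-- Limiting subdifferential of `f` at `x` (empty outside `dom f`). -/
def limSubdiff (f : E → EReal) (x : E) : Set E :=
  {u | ∃ r : ℝ, f x = (r : EReal) ∧
    (u, (-1 : ℝ)) ∈ limitingNormalCone2 (epiSet f) (x, r)}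

/-- Limiting subdifferential of `f` at `(∞, ȳ)`. -/
def limSubdiffAtInfty (f : E → EReal) (ybar : ℝ) : Set E :=
  {u | (u, (-1 : ℝ)) ∈ normalConeAtInfty (epiSet f) ybar}

/-- Singular subdifferential of `f` at `(∞, ȳ)`. -/
def singSubdiffAtInfty (f : E → EReal) (ybar : ℝ) : Set E :=
  {u | (u, (0 : ℝ)) ∈ normalConeAtInfty (epiSet f) ybar}

/-- Inverse of a set-valued mapping. -/
def svInv (S : E → Set F) (y : F) : Set E := {x | y ∈ S x}

/-- Preimage `F⁻¹(V) = {x : F(x) ∩ V ≠ ∅}`. -/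
def svPreimage (S : E → Set F) (V : Set F) : Set E := {x | (S x ∩ V).Nonempty}

/-- Distance function of a set-valued mapping, with value `+∞` on empty values. -/
def dSV (S : E → Set F) (p : E × F) : EReal :=
  ((EMetric.infEdist p.2 (S p.1) : ℝ≥0∞) : EReal)

/-- Regular normal cone on `(E × F) × ℝ`. -/
def frechetNormalCone3 (Ω : Set ((E × F) × ℝ)) (p : (E × F) × ℝ) : Set ((E × F) × ℝ) :=
  {ξ | p ∈ Ω ∧ ∀ ε > (0:ℝ), ∀ᶠ q in nhdsWithin p Ω,
      ⟪ξ.1.1, q.1.1 - p.1.1⟫ + ⟪ξ.1.2, q.1.2 - p.1.2⟫ + ξ.2 * (q.2 - p.2)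
        ≤ ε * ‖q - p‖}

/-- Limiting normal cone on `(E × F) × ℝ`. -/
def limitingNormalCone3 (Ω : Set ((E × F) × ℝ)) (p : (E × F) × ℝ) : Set ((E × F) × ℝ) :=
  {ξ | ∃ pk ξk : ℕ → (E × F) × ℝ, (∀ k, pk k ∈ Ω) ∧ Tendsto pk atTop (𝓝 p) ∧
    (∀ k, ξk k ∈ frechetNormalCone3 Ω (pk k)) ∧ Tendsto ξk atTop (𝓝 ξ)}

/-- Limiting subdifferential of the distance function `d_F`. -/
def limSubdiffD (S : E → Set F) (p : E × F) : Set (E × F) :=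
  {w | ∃ r : ℝ, dSV S p = (r : EReal) ∧
    (w, (-1 : ℝ)) ∈ limitingNormalCone3 {q : (E × F) × ℝ | dSV S q.1 ≤ (q.2 : EReal)} (p, r)}

/-- The set `J⁺(F₁ + F₂, y)`. -/
def jplus (S₁ S₂ : E → Set F) (y : F) : Set (F × F) :=
  {q | ∃ xk : ℕ → E, ∃ y1k y2k : ℕ → F,
    Tendsto (fun k => ‖xk k‖) atTop atTop ∧
    (∀ k, y1k k ∈ S₁ (xk k)) ∧ (∀ k, y2k k ∈ S₂ (xk k)) ∧
    Tendsto y1k atTop (𝓝 q.1) ∧ Tendsto y2k atTop (𝓝 q.2) ∧ q.1 + q.2 = y}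

/-- The set `J°(F₂ ∘ F₁, y)`. -/
def jcirc (S₁ : E → Set G) (S₂ : G → Set F) (y : F) : Set G :=
  {z | ∃ xk : ℕ → E, ∃ zk : ℕ → G, ∃ yk : ℕ → F,
    Tendsto (fun k => ‖xk k‖) atTop atTop ∧ (∀ k, zk k ∈ S₁ (xk k)) ∧
    (∀ k, yk k ∈ S₂ (zk k)) ∧ Tendsto zk atTop (𝓝 z) ∧ Tendsto yk atTop (𝓝 y)}

/-- Composition `F₂ ∘ F₁` of set-valued mappings. -/
def svComp (S₂ : G → Set F) (S₁ : E → Set G) (x : E) : Set F :=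
  {y | ∃ z ∈ S₁ x, y ∈ S₂ z}

abbrev Eucl (n : ℕ) := EuclideanSpace ℝ (Fin n)

/-- Key algebraic lemma: linearization remainder of the pair norm. -/
lemma my_pair_key (a a₀ : E) (b b₀ : F) :
    ⟪a₀, a₀ - a⟫ + ⟪b₀, b₀ - b⟫ ≤
      Real.sqrt (‖a₀‖^2 + ‖b₀‖^2) *
        (Real.sqrt (‖a₀‖^2 + ‖b₀‖^2) - Real.sqrt (‖a‖^2 + ‖b‖^2))
      + (‖a - a₀‖^2 + ‖b - b₀‖^2) / 2 := by
  set s := Real.sqrt (‖a₀‖^2 + ‖b₀‖^2) with hs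
  set t := Real.sqrt (‖a‖^2 + ‖b‖^2) with ht
  have hs2 : s^2 = ‖a₀‖^2 + ‖b₀‖^2 := Real.sq_sqrt (by positivity)
  have ht2 : t^2 = ‖a‖^2 + ‖b‖^2 := Real.sq_sqrt (by positivity)
  have h1 : ⟪a₀, a₀ - a⟫ = ‖a₀‖^2 - ⟪a₀, a⟫ := by
    rw [inner_sub_right, real_inner_self_eq_norm_sq]
  have h2 : ⟪b₀, b₀ - b⟫ = ‖b₀‖^2 - ⟪b₀, b⟫ := by
    rw [inner_sub_right, real_inner_self_eq_norm_sq]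
  have h3 : ‖a - a₀‖^2 = ‖a‖^2 - 2 * ⟪a₀, a⟫ + ‖a₀‖^2 := by
    rw [norm_sub_sq_real, real_inner_comm]
  have h4 : ‖b - b₀‖^2 = ‖b‖^2 - 2 * ⟪b₀, b⟫ + ‖b₀‖^2 := by
    rw [norm_sub_sq_real, real_inner_comm]
  nlinarith [sq_nonneg (s - t)]

lemma my_quad_frechet2 {Ω : Set (E × F)} {p : E × F} {ξ : E × F} {C : ℝ} (hC : 0 ≤ C)
    (hp : p ∈ Ω)
    (h : ∀ q ∈ Ω, ⟪ξ.1, q.1 - p.1⟫ + ⟪ξ.2, q.2 - p.2⟫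
        ≤ C * (‖q.1 - p.1‖^2 + ‖q.2 - p.2‖^2)) :
    ξ ∈ frechetNormalCone2 Ω p := by
  refine ⟨hp, fun ε hε => ?_⟩
  have hball : ∀ᶠ q in nhdsWithin p Ω, dist q p < ε / (2*C+1) := by
    apply eventually_nhdsWithin_of_eventually_nhds
    exact Metric.eventually_nhds_iff.mpr ⟨ε/(2*C+1), by positivity, fun {q} hq => hq⟩
  filter_upwards [hball, eventually_mem_nhdsWithin] with q hq hqΩ
  have h1 : ‖q.1 - p.1‖ ≤ ‖q - p‖ := norm_fst_le (q - p)
  have h2 : ‖q.2 - p.2‖ ≤ ‖q - p‖ := norm_snd_le (q - p)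
  have hd : ‖q - p‖ < ε / (2*C+1) := by rwa [dist_eq_norm] at hq
  have := h q hqΩ
  have hn : (0:ℝ) ≤ ‖q - p‖ := norm_nonneg _
  have hd2 : ‖q - p‖ * (2*C+1) < ε := (lt_div_iff₀ (by positivity)).mp hd
  nlinarith [mul_le_mul_of_nonneg_right hd2.le hn,
    mul_le_mul h1 h1 (norm_nonneg _) hn, mul_le_mul h2 h2 (norm_nonneg _) hn,
    mul_le_mul_of_nonneg_left (mul_le_mul h1 h1 (norm_nonneg _) hn) hC,
    mul_le_mul_of_nonneg_left (mul_le_mul h2 h2 (norm_nonneg _) hn) hC]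

lemma my_quad_frechet1 {Ω : Set E} {x : E} {ξ : E} {C : ℝ} (hC : 0 ≤ C)
    (hx : x ∈ Ω) (h : ∀ u ∈ Ω, ⟪ξ, u - x⟫ ≤ C * ‖u - x‖^2) :
    ξ ∈ frechetNormalCone1 Ω x := by
  refine ⟨hx, fun ε hε => ?_⟩
  have hball : ∀ᶠ u in nhdsWithin x Ω, dist u x < ε / (C+1) := by
    apply eventually_nhdsWithin_of_eventually_nhds
    exact Metric.eventually_nhds_iff.mpr ⟨ε/(C+1), by positivity, fun {q} hq => hq⟩
  filter_upwards [hball, eventually_mem_nhdsWithin] with u hu huΩ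
  have hd : ‖u - x‖ < ε / (C+1) := by rwa [dist_eq_norm] at hu
  have := h u huΩ
  have hn : (0:ℝ) ≤ ‖u - x‖ := norm_nonneg _
  have hd2 : ‖u - x‖ * (C+1) < ε := (lt_div_iff₀ (by positivity)).mp hd
  nlinarith [mul_le_mul_of_nonneg_right hd2.le hn, mul_self_nonneg ‖u - x‖]

lemma my_cone_add {K : Set F} (hKcone : ∀ t : ℝ, 0 < t → ∀ y ∈ K, t • y ∈ K)
    (hKconv : Convex ℝ K) {a b : F} (ha : a ∈ K) (hb : b ∈ K) : a + b ∈ K := by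
  have h1 : (1/2 : ℝ) • a + (1/2 : ℝ) • b ∈ K :=
    hKconv ha hb (by norm_num) (by norm_num) (by norm_num)
  have h2 := hKcone 2 (by norm_num) _ h1
  have : (2:ℝ) • ((1/2 : ℝ) • a + (1/2 : ℝ) • b) = a + b := by
    rw [smul_add, smul_smul, smul_smul]; norm_num
  rwa [this] at h2

lemma my_interior_add {K : Set F} (hKcone : ∀ t : ℝ, 0 < t → ∀ y ∈ K, t • y ∈ K)
    (hKconv : Convex ℝ K) {w v : F} (hw : w ∈ K) (hv : v ∈ interior K) :
    w + v ∈ interior K := by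
  have hsub : {w} + interior K ⊆ K := by
    rintro z ⟨w', hw', u, hu, rfl⟩
    rcases hw' with rfl
    exact my_cone_add hKcone hKconv hw (interior_subset hu)
  have hopen : IsOpen ({w} + interior K) := isOpen_interior.add_left
  exact interior_maximal hsub hopen ⟨w, rfl, v, hv, rfl⟩

lemma my_smul_interior {K : Set F} (hKcone : ∀ t : ℝ, 0 < t → ∀ y ∈ K, t • y ∈ K)
    {t : ℝ} (ht : 0 < t) {e : F} (he : e ∈ interior K) : t • e ∈ interior K := by
  have hsub : t • interior K ⊆ K := by
    rintro z ⟨u, hu, rfl⟩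
    exact hKcone t ht u (interior_subset hu)
  have hopen : IsOpen (t • interior K) := isOpen_interior.smul₀ (ne_of_gt ht)
  exact interior_maximal hsub hopen ⟨e, he, rfl⟩

lemma my_zero_mem {K : Set F} (hKcone : ∀ t : ℝ, 0 < t → ∀ y ∈ K, t • y ∈ K)
    (hKclosed : IsClosed K) {e : F} (he : e ∈ K) : (0:F) ∈ K := by
  have hmem : ∀ n : ℕ, (1/(n+1) : ℝ) • e ∈ K := fun n => hKcone _ (by positivity) e he
  have hlim : Tendsto (fun n : ℕ => (1/(n+1) : ℝ) • e) atTop (𝓝 0) := by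
    have h0 : Tendsto (fun n : ℕ => (1/(n+1) : ℝ)) atTop (𝓝 0) :=
      tendsto_one_div_add_atTop_nhds_zero_nat
    simpa using h0.smul_const e
  exact hKclosed.mem_of_tendsto hlim (Eventually.of_forall hmem)

lemma my_le_sqrt {a c : ℝ} (ha : 0 ≤ a) (h : a^2 ≤ c) : a ≤ Real.sqrt c := by
  have := Real.sqrt_le_sqrt h
  rwa [Real.sqrt_sq ha] at this

lemma my_sublevel_bounded {n m : ℕ} (xk : Eucl n) (yk ybar : Eucl m) (v : Eucl m)
    (ρ δ : ℝ) (hρ : 0 < ρ) (hδ : 0 ≤ δ) :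
    Bornology.IsBounded {p : (Eucl n × Eucl m) × (Eucl n × Eucl m) |
      Real.sqrt (‖p.1.1 - p.2.1‖^2 + ‖p.1.2 - p.2.2 + v‖^2)
        + ρ * (‖p.1.1 - xk‖^2 + ‖p.1.2 - yk‖^2) ≤ δ} := by
  rw [isBounded_iff_forall_norm_le]
  refine ⟨‖xk‖ + ‖yk‖ + Real.sqrt (δ/ρ) + δ + δ + ‖v‖, ?_⟩
  rintro ⟨⟨x, y⟩, u, w⟩ hp
  have hfp : Real.sqrt (‖x - u‖^2 + ‖y - w + v‖^2)
      + ρ * (‖x - xk‖^2 + ‖y - yk‖^2) ≤ δ := hp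
  have hsq : 0 ≤ Real.sqrt (δ/ρ) := Real.sqrt_nonneg _
  have hs0 : 0 ≤ Real.sqrt (‖x - u‖^2 + ‖y - w + v‖^2) := Real.sqrt_nonneg _
  have hpen : ρ * (‖x - xk‖^2 + ‖y - yk‖^2) ≤ δ := by linarith
  have hx2 : ‖x - xk‖^2 ≤ δ/ρ := by
    rw [le_div_iff₀ hρ]; nlinarith [sq_nonneg ‖y - yk‖]
  have hy2 : ‖y - yk‖^2 ≤ δ/ρ := by
    rw [le_div_iff₀ hρ]; nlinarith [sq_nonneg ‖x - xk‖]
  have hxb : ‖x - xk‖ ≤ Real.sqrt (δ/ρ) := my_le_sqrt (norm_nonneg _) hx2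
  have hyb : ‖y - yk‖ ≤ Real.sqrt (δ/ρ) := my_le_sqrt (norm_nonneg _) hy2
  have hsqV : Real.sqrt (‖x - u‖^2 + ‖y - w + v‖^2) ≤ δ := by
    nlinarith [sq_nonneg ‖x - xk‖, sq_nonneg ‖y - yk‖]
  have hxu : ‖x - u‖ ≤ δ :=
    le_trans (my_le_sqrt (norm_nonneg _) (by nlinarith [sq_nonneg ‖y - w + v‖])) hsqV
  have hyw : ‖y - w + v‖ ≤ δ :=
    le_trans (my_le_sqrt (norm_nonneg _) (by nlinarith [sq_nonneg ‖x - u‖])) hsqV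
  have hxn : ‖x‖ ≤ ‖xk‖ + Real.sqrt (δ/ρ) := by
    have := norm_sub_norm_le x xk; linarith
  have hyn : ‖y‖ ≤ ‖yk‖ + Real.sqrt (δ/ρ) := by
    have := norm_sub_norm_le y yk; linarith
  have hun : ‖u‖ ≤ ‖x‖ + δ := by
    have h1 : ‖u‖ - ‖x‖ ≤ ‖u - x‖ := norm_sub_norm_le u x
    rw [norm_sub_rev] at h1; linarith
  have hwn : ‖w‖ ≤ ‖y‖ + δ + ‖v‖ := by
    have h2 : ‖(y + v) - (y - w + v)‖ ≤ ‖y + v‖ + ‖y - w + v‖ := norm_sub_le _ _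
    have h1 : (y + v) - (y - w + v) = w := by abel
    rw [h1] at h2
    have h3 : ‖y + v‖ ≤ ‖y‖ + ‖v‖ := norm_add_le _ _
    linarith
  have h0y : (0:ℝ) ≤ ‖v‖ := norm_nonneg _
  have h0xk : (0:ℝ) ≤ ‖xk‖ := norm_nonneg _
  have h0yk : (0:ℝ) ≤ ‖yk‖ := norm_nonneg _
  rw [Prod.norm_def, Prod.norm_def, Prod.norm_def]
  simp only [max_le_iff]
  exact ⟨⟨by linarith, by linarith⟩, by linarith, by linarith⟩

lemma my_min_exists {n m : ℕ} (xk : Eucl n) (yk : Eucl m) (v : Eucl m)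
    (ρ : ℝ) (hρ : 0 < ρ)
    (D : Set ((Eucl n × Eucl m) × (Eucl n × Eucl m))) (hD : IsClosed D)
    (z₀ : (Eucl n × Eucl m) × (Eucl n × Eucl m)) (hz₀ : z₀ ∈ D) :
    ∃ xh yh uh wh, ((xh, yh), (uh, wh)) ∈ D ∧
      ∀ p ∈ D, Real.sqrt (‖xh - uh‖^2 + ‖yh - wh + v‖^2)
          + ρ * (‖xh - xk‖^2 + ‖yh - yk‖^2)
        ≤ Real.sqrt (‖p.1.1 - p.2.1‖^2 + ‖p.1.2 - p.2.2 + v‖^2)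
          + ρ * (‖p.1.1 - xk‖^2 + ‖p.1.2 - yk‖^2) := by
  set f : ((Eucl n × Eucl m) × (Eucl n × Eucl m)) → ℝ := fun p =>
    Real.sqrt (‖p.1.1 - p.2.1‖^2 + ‖p.1.2 - p.2.2 + v‖^2)
      + ρ * (‖p.1.1 - xk‖^2 + ‖p.1.2 - yk‖^2) with hfdef
  have hf_cont : Continuous f := by
    apply Continuous.add
    · apply Real.continuous_sqrt.comp
      fun_prop
    · fun_prop
  have hf0 : ∀ p, 0 ≤ f p := fun p => by
    have h1 : 0 ≤ Real.sqrt (‖p.1.1 - p.2.1‖^2 + ‖p.1.2 - p.2.2 + v‖^2) :=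
      Real.sqrt_nonneg _
    have h2 : 0 ≤ ρ * (‖p.1.1 - xk‖^2 + ‖p.1.2 - yk‖^2) := by positivity
    simpa [hfdef] using add_nonneg h1 h2
  have hCcl : IsClosed (D ∩ f ⁻¹' (Iic (f z₀))) :=
    hD.inter (isClosed_Iic.preimage hf_cont)
  have hCbdd : Bornology.IsBounded (D ∩ f ⁻¹' (Iic (f z₀))) := by
    apply (my_sublevel_bounded xk yk 0 v ρ (f z₀) hρ (hf0 z₀)).subset
    rintro p ⟨-, hp⟩
    exact hp
  have hCcpt : IsCompact (D ∩ f ⁻¹' (Iic (f z₀))) :=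
    Metric.isCompact_of_isClosed_isBounded hCcl hCbdd
  obtain ⟨zmin, hzminC, hminOn⟩ :=
    hCcpt.exists_isMinOn ⟨z₀, hz₀, le_refl (f z₀)⟩ hf_cont.continuousOn
  obtain ⟨⟨xh, yh⟩, uh, wh⟩ := zmin
  refine ⟨xh, yh, uh, wh, hzminC.1, ?_⟩
  intro p hp
  by_cases hle : f p ≤ f z₀
  · exact hminOn ⟨hp, hle⟩
  · push_neg at hle
    have h1 : f ((xh, yh), (uh, wh)) ≤ f z₀ := hminOn ⟨hz₀, le_refl (f z₀)⟩
    exact le_trans h1 hle.le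

lemma my_sq_le {a c : ℝ} (ha : 0 ≤ a) (hc : 0 ≤ c) (h : a ≤ Real.sqrt c) : a^2 ≤ c := by
  have := pow_le_pow_left₀ ha h 2
  rwa [Real.sq_sqrt hc] at this

set_option maxHeartbeats 2000000 in
lemma my_stage {n m : ℕ} {S : Eucl n → Set (Eucl m)} (hS : IsClosed (svGraph S))
    {K : Set (Eucl m)} {Ω : Set (Eucl n)}
    (hKcone : ∀ t : ℝ, 0 < t → ∀ y ∈ K, t • y ∈ K)
    (hKconv : Convex ℝ K) (hKclosed : IsClosed K) (hΩclosed : IsClosed Ω)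
    {ybar e : Eucl m} (he : e ∈ interior K)
    (hweak : ∀ z ∈ interior K, ybar - z ∉ ⋃ x ∈ Ω, S x)
    {xk : Eucl n} {yk : Eucl m} (hxk : xk ∈ Ω) (hyk : yk ∈ S xk)
    {t ρ : ℝ} (ht : 0 < t) (hρ : 0 < ρ) :
    ∃ (xh uh : Eucl n) (yh : Eucl m) (ξΩ : Eucl n) (c : Eucl m) (ξg : Eucl n × Eucl m),
      yh ∈ S xh ∧ uh ∈ Ω ∧
      ρ * ‖xh - xk‖^2 ≤ ‖yk - ybar + t • e‖ ∧
      ρ * ‖yh - yk‖^2 ≤ ‖yk - ybar + t • e‖ ∧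
      ‖uh - xh‖ ≤ ‖yk - ybar + t • e‖ ∧
      ‖ξΩ‖^2 + ‖c‖^2 = 1 ∧ (∀ q ∈ K, 0 ≤ ⟪c, q⟫) ∧
      ξΩ ∈ frechetNormalCone1 Ω uh ∧
      ξg ∈ frechetNormalCone2 (svGraph S) (xh, yh) ∧
      ‖ξg.1 + ξΩ‖ = 2*ρ*‖xh - xk‖ ∧ ‖ξg.2 + c‖ = 2*ρ*‖yh - yk‖ := by
  classical
  have h0K : (0 : Eucl m) ∈ K := my_zero_mem hKcone hKclosed (interior_subset he)
  have hWclosed : IsClosed {w : Eucl m | ybar - w ∈ K} :=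
    hKclosed.preimage (continuous_const.sub continuous_id)
  have hDclosed : IsClosed ((svGraph S) ×ˢ (Ω ×ˢ {w : Eucl m | ybar - w ∈ K})) :=
    hS.prod (hΩclosed.prod hWclosed)
  have hz₀D : ((xk, yk), (xk, ybar)) ∈ (svGraph S) ×ˢ (Ω ×ˢ {w : Eucl m | ybar - w ∈ K}) := by
    refine ⟨hyk, hxk, ?_⟩
    show ybar - ybar ∈ K
    simpa using h0K
  obtain ⟨xh, yh, uh, wh, hminD, hmin⟩ :=
    my_min_exists xk yk (t • e) ρ hρ _ hDclosed _ hz₀D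
  obtain ⟨hgraph, huh, hwh⟩ := hminD
  have hgraph' : yh ∈ S xh := hgraph
  have hwh' : ybar - wh ∈ K := hwh
  -- value at the base point
  have hbase := hmin ((xk, yk), (xk, ybar)) hz₀D
  simp only [sub_self, norm_zero] at hbase
  rw [show (0:ℝ)^2 + ‖yk - ybar + t • e‖^2 = ‖yk - ybar + t • e‖^2 by ring,
    show (0:ℝ)^2 + (0:ℝ)^2 = 0 by ring, mul_zero, add_zero,
    Real.sqrt_sq (norm_nonneg _)] at hbase
  -- name s
  obtain ⟨s, hs⟩ : ∃ s, Real.sqrt (‖xh - uh‖^2 + ‖yh - wh + t • e‖^2) = s := ⟨_, rfl⟩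
  rw [hs] at hbase
  have hs0 : 0 ≤ s := by rw [← hs]; exact Real.sqrt_nonneg _
  have hss : s^2 = ‖xh - uh‖^2 + ‖yh - wh + t • e‖^2 := by
    rw [← hs, Real.sq_sqrt (by positivity)]
  have hδ0 : (0:ℝ) ≤ ‖yk - ybar + t • e‖ := norm_nonneg _
  have hpen1 : ρ * ‖xh - xk‖^2 ≤ ‖yk - ybar + t • e‖ := by
    nlinarith [sq_nonneg ‖yh - yk‖, mul_nonneg hρ.le (sq_nonneg ‖yh - yk‖)]
  have hpen2 : ρ * ‖yh - yk‖^2 ≤ ‖yk - ybar + t • e‖ := by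
    nlinarith [mul_nonneg hρ.le (sq_nonneg ‖xh - xk‖)]
  have hsδ : s ≤ ‖yk - ybar + t • e‖ := by
    nlinarith [mul_nonneg hρ.le (sq_nonneg ‖xh - xk‖),
      mul_nonneg hρ.le (sq_nonneg ‖yh - yk‖)]
  -- s is positive (extremality)
  have hspos : 0 < s := by
    rcases lt_or_eq_of_le hs0 with h | h
    · exact h
    have hsum : ‖xh - uh‖^2 + ‖yh - wh + t • e‖^2 = 0 := by
      rw [← hss, ← h]; ring
    have h1 : xh = uh := by
      have : ‖xh - uh‖^2 = 0 := by nlinarith [sq_nonneg ‖yh - wh + t • e‖]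
      have : ‖xh - uh‖ = 0 := by nlinarith [norm_nonneg (xh - uh)]
      rw [norm_eq_zero, sub_eq_zero] at this
      exact this
    have h2 : yh = wh - t • e := by
      have : ‖yh - wh + t • e‖^2 = 0 := by nlinarith [sq_nonneg ‖xh - uh‖]
      have : ‖yh - wh + t • e‖ = 0 := by nlinarith [norm_nonneg (yh - wh + t • e)]
      rw [norm_eq_zero] at this
      apply eq_of_sub_eq_zero
      rw [show yh - (wh - t • e) = yh - wh + t • e by abel]
      exact this
    exfalso
    have hz : (ybar - wh) + t • e ∈ interior K :=
      my_interior_add hKcone hKconv hwh' (my_smul_interior hKcone ht he)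
    apply hweak _ hz
    have hyb : ybar - ((ybar - wh) + t • e) = yh := by rw [h2]; abel
    rw [hyb]
    exact mem_biUnion huh (h1 ▸ hgraph')
  have hsne : s ≠ 0 := ne_of_gt hspos
  have hinv0 : (0:ℝ) ≤ s⁻¹ := inv_nonneg.mpr hs0
  -- the multipliers
  refine ⟨xh, uh, yh, s⁻¹ • (xh - uh), s⁻¹ • (yh - wh + t • e),
    (s⁻¹ • (uh - xh) - (2*ρ) • (xh - xk), s⁻¹ • ((wh - t • e) - yh) - (2*ρ) • (yh - yk)),
    hgraph', huh, hpen1, hpen2, ?_, ?_, ?_, ?_, ?_, ?_, ?_⟩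
  · -- ‖uh - xh‖ ≤ δ
    have h1 : ‖uh - xh‖ = ‖xh - uh‖ := norm_sub_rev _ _
    nlinarith [norm_nonneg (xh - uh), sq_nonneg ‖yh - wh + t • e‖]
  · -- norms sum to 1
    rw [norm_smul, norm_smul, Real.norm_eq_abs, abs_of_pos (inv_pos.mpr hspos)]
    rw [mul_pow, mul_pow, ← mul_add, ← hss]
    field_simp
  · -- positivity on K
    intro q hq
    have hb₀q : 0 ≤ ⟪yh - wh + t • e, q⟫ := by
      have hσ : ∀ σ : ℝ, 0 < σ →
          0 ≤ 2*σ*⟪yh - wh + t • e, q⟫ + σ^2*‖q‖^2 := by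
        intro σ hσ
        have hmem : ((xh, yh), (uh, wh - σ • q)) ∈
            (svGraph S) ×ˢ (Ω ×ˢ {w : Eucl m | ybar - w ∈ K}) := by
          refine ⟨hgraph, huh, ?_⟩
          show ybar - (wh - σ • q) ∈ K
          rw [show ybar - (wh - σ • q) = (ybar - wh) + σ • q by abel]
          exact my_cone_add hKcone hKconv hwh' (hKcone σ hσ q hq)
        have h1 := hmin _ hmem
        simp only at h1
        rw [hs, show yh - (wh - σ • q) + t • e = (yh - wh + t • e) + σ • q by abel] at h1
        have h2 : s ≤ Real.sqrt (‖xh - uh‖^2 + ‖(yh - wh + t • e) + σ • q‖^2) := by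
          linarith
        have h3 := my_sq_le hs0 (by positivity) h2
        rw [hss] at h3
        have h4 : ‖(yh - wh + t • e) + σ • q‖^2
            = ‖yh - wh + t • e‖^2 + 2*(σ*⟪yh - wh + t • e, q⟫) + σ^2*‖q‖^2 := by
          rw [norm_add_sq_real, real_inner_smul_right, norm_smul, Real.norm_eq_abs,
            abs_of_pos hσ, mul_pow]
        nlinarith
      by_contra hneg
      push_neg at hneg
      have hq0 : q ≠ 0 := by
        intro h
        rw [h, inner_zero_right] at hneg
        exact absurd hneg (lt_irrefl 0)
      have hnq : 0 < ‖q‖^2 := pow_pos (norm_pos_iff.mpr hq0) 2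
      have hip2 : 0 < ⟪yh - wh + t • e, q⟫^2 := by nlinarith
      have hσpos : 0 < -⟪yh - wh + t • e, q⟫/‖q‖^2 := div_pos (neg_pos.mpr hneg) hnq
      have h5 := hσ _ hσpos
      have h6 : 2*(-⟪yh - wh + t • e, q⟫/‖q‖^2)*⟪yh - wh + t • e, q⟫
          + (-⟪yh - wh + t • e, q⟫/‖q‖^2)^2*‖q‖^2 = -(⟪yh - wh + t • e, q⟫^2/‖q‖^2) := by
        field_simp
        ring
      rw [h6] at h5
      have h7 : 0 < ⟪yh - wh + t • e, q⟫^2/‖q‖^2 := div_pos hip2 hnq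
      linarith
    rw [real_inner_smul_left]
    exact mul_nonneg hinv0 hb₀q
  · -- Fréchet normal to Ω at uh
    apply my_quad_frechet1 (C := s⁻¹/2) (by positivity) huh
    intro u hu
    have hmem : ((xh, yh), (u, wh)) ∈
        (svGraph S) ×ˢ (Ω ×ˢ {w : Eucl m | ybar - w ∈ K}) := ⟨hgraph, hu, hwh⟩
    have h1 := hmin _ hmem
    simp only at h1
    rw [hs] at h1
    have h2 : s ≤ Real.sqrt (‖xh - u‖^2 + ‖yh - wh + t • e‖^2) := by linarith
    have hkey := my_pair_key (a := xh - u) (a₀ := xh - uh)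
      (b := yh - wh + t • e) (b₀ := yh - wh + t • e)
    rw [hs, show (xh - uh) - (xh - u) = u - uh by abel, sub_self, inner_zero_right,
      show (xh - u) - (xh - uh) = uh - u by abel, norm_zero] at hkey
    have h3 : s * (s - Real.sqrt (‖xh - u‖^2 + ‖yh - wh + t • e‖^2)) ≤ 0 :=
      mul_nonpos_of_nonneg_of_nonpos hs0 (by linarith)
    have h4 : ⟪xh - uh, u - uh⟫ ≤ ‖uh - u‖^2/2 := by linarith
    rw [real_inner_smul_left]
    have h5 : ‖uh - u‖ = ‖u - uh‖ := norm_sub_rev _ _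
    rw [h5] at h4
    calc s⁻¹ * ⟪xh - uh, u - uh⟫ ≤ s⁻¹ * (‖u - uh‖^2/2) :=
          mul_le_mul_of_nonneg_left h4 hinv0
      _ = s⁻¹/2 * ‖u - uh‖^2 := by ring
  · -- Fréchet normal to the graph at (xh, yh)
    apply my_quad_frechet2 (C := ρ + s⁻¹/2) (by positivity) hgraph
    intro q hq
    have hmem : ((q.1, q.2), (uh, wh)) ∈
        (svGraph S) ×ˢ (Ω ×ˢ {w : Eucl m | ybar - w ∈ K}) := ⟨hq, huh, hwh⟩
    have h1 := hmin _ hmem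
    simp only at h1
    rw [hs] at h1
    have hkey := my_pair_key (a := q.1 - uh) (a₀ := xh - uh)
      (b := q.2 - wh + t • e) (b₀ := yh - wh + t • e)
    rw [hs, show (xh - uh) - (q.1 - uh) = xh - q.1 by abel,
      show (yh - wh + t • e) - (q.2 - wh + t • e) = yh - q.2 by abel,
      show (q.1 - uh) - (xh - uh) = q.1 - xh by abel,
      show (q.2 - wh + t • e) - (yh - wh + t • e) = q.2 - yh by abel] at hkey
    -- quadratic expansions of the penalty difference
    have hexp1 : ‖q.1 - xk‖^2 = ‖q.1 - xh‖^2 + 2*⟪q.1 - xh, xh - xk⟫ + ‖xh - xk‖^2 := by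
      have := norm_add_sq_real (q.1 - xh) (xh - xk)
      rw [show (q.1 - xh) + (xh - xk) = q.1 - xk by abel] at this
      linarith
    have hexp2 : ‖q.2 - yk‖^2 = ‖q.2 - yh‖^2 + 2*⟪q.2 - yh, yh - yk⟫ + ‖yh - yk‖^2 := by
      have := norm_add_sq_real (q.2 - yh) (yh - yk)
      rw [show (q.2 - yh) + (yh - yk) = q.2 - yk by abel] at this
      linarith
    -- s - t' ≤ ρ * (penalty difference)
    have h2 : s - Real.sqrt (‖q.1 - uh‖^2 + ‖q.2 - wh + t • e‖^2)
        ≤ ρ * ((‖q.1 - xh‖^2 + ‖q.2 - yh‖^2)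
          + 2*(⟪q.1 - xh, xh - xk⟫ + ⟪q.2 - yh, yh - yk⟫)) := by
      nlinarith
    have h3 : s * (s - Real.sqrt (‖q.1 - uh‖^2 + ‖q.2 - wh + t • e‖^2))
        ≤ s * (ρ * ((‖q.1 - xh‖^2 + ‖q.2 - yh‖^2)
          + 2*(⟪q.1 - xh, xh - xk⟫ + ⟪q.2 - yh, yh - yk⟫))) :=
      mul_le_mul_of_nonneg_left h2 hs0
    have h4 : ⟪xh - uh, xh - q.1⟫ + ⟪yh - wh + t • e, yh - q.2⟫
        ≤ s * (ρ * ((‖q.1 - xh‖^2 + ‖q.2 - yh‖^2)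
          + 2*(⟪q.1 - xh, xh - xk⟫ + ⟪q.2 - yh, yh - yk⟫)))
          + (‖q.1 - xh‖^2 + ‖q.2 - yh‖^2)/2 := by linarith
    have h5 := mul_le_mul_of_nonneg_left h4 hinv0
    have h6 : s⁻¹ * (s * (ρ * ((‖q.1 - xh‖^2 + ‖q.2 - yh‖^2)
          + 2*(⟪q.1 - xh, xh - xk⟫ + ⟪q.2 - yh, yh - yk⟫)))
          + (‖q.1 - xh‖^2 + ‖q.2 - yh‖^2)/2)
        = ρ * ((‖q.1 - xh‖^2 + ‖q.2 - yh‖^2)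
          + 2*(⟪q.1 - xh, xh - xk⟫ + ⟪q.2 - yh, yh - yk⟫))
          + s⁻¹ * ((‖q.1 - xh‖^2 + ‖q.2 - yh‖^2)/2) := by
      rw [mul_add, ← mul_assoc, inv_mul_cancel₀ hsne, one_mul]
    rw [h6] at h5
    -- expand the inner products in the goal
    have hg1 : ⟪s⁻¹ • (uh - xh) - (2*ρ) • (xh - xk), q.1 - xh⟫
        = s⁻¹ * ⟪xh - uh, xh - q.1⟫ - (2*ρ) * ⟪q.1 - xh, xh - xk⟫ := by
      rw [inner_sub_left, real_inner_smul_left, real_inner_smul_left]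
      rw [show ⟪uh - xh, q.1 - xh⟫ = ⟪xh - uh, xh - q.1⟫ by
        rw [show uh - xh = -(xh - uh) by abel, show q.1 - xh = -(xh - q.1) by abel,
          inner_neg_neg]]
      rw [real_inner_comm (xh - xk)]
    have hg2 : ⟪s⁻¹ • ((wh - t • e) - yh) - (2*ρ) • (yh - yk), q.2 - yh⟫
        = s⁻¹ * ⟪yh - wh + t • e, yh - q.2⟫ - (2*ρ) * ⟪q.2 - yh, yh - yk⟫ := by
      rw [inner_sub_left, real_inner_smul_left, real_inner_smul_left]
      rw [show ⟪(wh - t • e) - yh, q.2 - yh⟫ = ⟪yh - wh + t • e, yh - q.2⟫ by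
        rw [show (wh - t • e) - yh = -(yh - wh + t • e) by abel,
          show q.2 - yh = -(yh - q.2) by abel, inner_neg_neg]]
      rw [real_inner_comm (yh - yk)]
    show ⟪s⁻¹ • (uh - xh) - (2*ρ) • (xh - xk), q.1 - xh⟫
        + ⟪s⁻¹ • ((wh - t • e) - yh) - (2*ρ) • (yh - yk), q.2 - yh⟫
        ≤ (ρ + s⁻¹/2) * (‖q.1 - xh‖^2 + ‖q.2 - yh‖^2)
    rw [hg1, hg2]
    have h7 : s⁻¹ * (⟪xh - uh, xh - q.1⟫ + ⟪yh - wh + t • e, yh - q.2⟫)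
        = s⁻¹ * ⟪xh - uh, xh - q.1⟫ + s⁻¹ * ⟪yh - wh + t • e, yh - q.2⟫ := by ring
    nlinarith [h5]
  · -- first error term
    rw [show s⁻¹ • (uh - xh) - (2*ρ) • (xh - xk) + s⁻¹ • (xh - uh)
        = -((2*ρ) • (xh - xk)) by
      rw [show (uh - xh) = -(xh - uh) by abel, smul_neg]; abel]
    rw [norm_neg, norm_smul, Real.norm_eq_abs, abs_of_pos (by positivity)]
  · -- second error term
    rw [show s⁻¹ • ((wh - t • e) - yh) - (2*ρ) • (yh - yk) + s⁻¹ • (yh - wh + t • e)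
        = -((2*ρ) • (yh - yk)) by
      rw [show ((wh - t • e) - yh) = -(yh - wh + t • e) by abel, smul_neg]; abel]
    rw [norm_neg, norm_smul, Real.norm_eq_abs, abs_of_pos (by positivity)]

lemma my_le_of_sq_le_sq {a b : ℝ} (ha : 0 ≤ a) (hb : 0 ≤ b) (h : a^2 ≤ b^2) : a ≤ b := by
  rw [← Real.sqrt_sq ha, ← Real.sqrt_sq hb]
  exact Real.sqrt_le_sqrt h

lemma my_inv_cube {κ a : ℝ} (hκ : 1 ≤ κ) (ha : 0 ≤ a) (h : (1/κ) * a^2 ≤ 1/κ^3) :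
    a ≤ 1/κ := by
  have hκ0 : 0 < κ := lt_of_lt_of_le one_pos hκ
  have h2 : a^2 ≤ (1/κ)^2 := by
    have h3 := mul_le_mul_of_nonneg_left h hκ0.le
    calc a^2 = κ * ((1/κ)*a^2) := by field_simp
      _ ≤ κ * (1/κ^3) := h3
      _ = (1/κ)^2 := by field_simp
  exact my_le_of_sq_le_sq ha (by positivity) h2

lemma my_tendsto_two_div_sq : Tendsto (fun j : ℕ => 2/((j:ℝ)+1)^2) atTop (𝓝 0) := by
  apply Tendsto.const_div_atTop
  have h1 : Tendsto (fun j : ℕ => ((j:ℝ)+1)) atTop atTop :=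
    tendsto_atTop_add_const_right _ _ tendsto_natCast_atTop_atTop
  exact (h1.atTop_mul_atTop₀ h1).congr (fun j => by ring)

lemma my_tendsto_two_div : Tendsto (fun j : ℕ => 2/((j:ℝ)+1)) atTop (𝓝 0) := by
  apply Tendsto.const_div_atTop
  exact tendsto_atTop_add_const_right _ _ tendsto_natCast_atTop_atTop


set_option maxHeartbeats 2000000 in
/-- Fermat's rule at infinity for set-valued optimization. -/
theorem stmt19 {n m : ℕ} (S : Eucl n → Set (Eucl m)) (hS : IsClosed (svGraph S))
    (K : Set (Eucl m)) (Ω : Set (Eucl n))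
    (hKne : K ≠ univ)
    (hKcone : ∀ t : ℝ, 0 < t → ∀ y ∈ K, t • y ∈ K)
    (hKconv : Convex ℝ K) (hKclosed : IsClosed K)
    (hKpointed : K ∩ (-K) = {0})
    (hKint : (interior K).Nonempty)
    (hΩclosed : IsClosed Ω) (hΩunbdd : ¬ Bornology.IsBounded Ω)
    (ybar : Eucl m)
    (hybar : ybar ∈ closure (⋃ x ∈ Ω, S x) \ (⋃ x ∈ Ω, S x))
    (hweak : ∀ z ∈ interior K, ybar - z ∉ ⋃ x ∈ Ω, S x)
    (hcq : coderivAtInfty S ybar 0 ∩ (-(normalConeAtInfty1 Ω)) = ({0} : Set (Eucl n))) :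
    ∃ c : Eucl m, c ≠ 0 ∧ (∀ y ∈ K, 0 ≤ ⟪c, y⟫) ∧
      (0 : Eucl n) ∈ coderivAtInfty S ybar c + normalConeAtInfty1 Ω := by

  classical
  obtain ⟨e, he⟩ := hKint
  obtain ⟨hcl, hnot⟩ := hybar
  -- a sequence in the image converging to ybar
  obtain ⟨b, hbmem, hblim⟩ := mem_closure_iff_seq_limit.mp hcl
  have hbmem' : ∀ j, ∃ x, x ∈ Ω ∧ b j ∈ S x := by
    intro j
    obtain ⟨x, hx⟩ := mem_iUnion.mp (hbmem j)
    obtain ⟨hxΩ, hbx⟩ := mem_iUnion.mp hx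
    exact ⟨x, hxΩ, hbx⟩
  choose a haΩ hba using hbmem'
  -- the x-components must escape to infinity
  have hanorm : Tendsto (fun j => ‖a j‖) atTop atTop := by
    by_contra hcon
    rw [Filter.tendsto_atTop] at hcon
    push_neg at hcon
    obtain ⟨M, hM⟩ := hcon
    obtain ⟨φ, hφmono, hφ⟩ := Filter.extraction_of_frequently_atTop (by
      apply hM.mono
      intro j hj
      exact hj)
    have hmem : ∀ i, a (φ i) ∈ closedBall (0 : Eucl n) M := by
      intro i
      rw [Metric.mem_closedBall, dist_zero_right]
      exact (hφ i).le
    obtain ⟨xbar, -, ψ, hψmono, hψlim⟩ :=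
      (isCompact_closedBall (0 : Eucl n) M).tendsto_subseq hmem
    have hxΩ : xbar ∈ Ω :=
      hΩclosed.mem_of_tendsto hψlim (Eventually.of_forall fun i => haΩ _)
    have hblim2 : Tendsto (fun i => b (φ (ψ i))) atTop (𝓝 ybar) :=
      hblim.comp (hφmono.comp hψmono).tendsto_atTop
    have hgr : (xbar, ybar) ∈ svGraph S := by
      apply hS.mem_of_tendsto (hψlim.prodMk_nhds hblim2)
      exact Eventually.of_forall fun i => hba _
    exact hnot (mem_biUnion hxΩ hgr)
  -- the per-k data
  have hstage : ∀ k : ℕ, ∃ (xh uh : Eucl n) (yh : Eucl m) (ξΩ : Eucl n) (c : Eucl m)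
      (ξg : Eucl n × Eucl m),
      yh ∈ S xh ∧ uh ∈ Ω ∧ ((k:ℝ) ≤ ‖xh‖) ∧ ((k:ℝ) - 1 ≤ ‖uh‖) ∧
      ‖yh - ybar‖ ≤ 2/((k:ℝ)+1) ∧
      ‖ξΩ‖^2 + ‖c‖^2 = 1 ∧ (∀ q ∈ K, 0 ≤ ⟪c, q⟫) ∧
      ξΩ ∈ frechetNormalCone1 Ω uh ∧
      ξg ∈ frechetNormalCone2 (svGraph S) (xh, yh) ∧
      ‖ξg.1 + ξΩ‖ ≤ 2/((k:ℝ)+1)^2 ∧ ‖ξg.2 + c‖ ≤ 2/((k:ℝ)+1)^2 := by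
    intro k
    have hκ : (1:ℝ) ≤ (k:ℝ)+1 := by
      have := Nat.cast_nonneg (α := ℝ) k
      linarith
    have hκ0 : (0:ℝ) < (k:ℝ)+1 := lt_of_lt_of_le one_pos hκ
    -- pick a good index
    have hev1 : ∀ᶠ j in atTop, ‖b j - ybar‖ ≤ 1/(2*((k:ℝ)+1)^3) := by
      have hpos : (0:ℝ) < 1/(2*((k:ℝ)+1)^3) := by positivity
      filter_upwards [hblim (Metric.closedBall_mem_nhds ybar hpos)] with j hj
      rwa [mem_preimage, Metric.mem_closedBall, dist_eq_norm] at hj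
    have hev2 : ∀ᶠ j in atTop, (k:ℝ)+1 ≤ ‖a j‖ := hanorm.eventually_ge_atTop _
    obtain ⟨j, hj1, hj2⟩ := (hev1.and hev2).exists
    have ht : (0:ℝ) < 1/(2*((k:ℝ)+1)^3*(‖e‖+1)) := by positivity
    have hρ : (0:ℝ) < 1/((k:ℝ)+1) := by positivity
    obtain ⟨xh, uh, yh, ξΩ, c, ξg, hP1, hP2, hb1, hb2, hb3, hP6, hP7, hP8, hP9, he1, he2⟩ :=
      my_stage hS hKcone hKconv hKclosed hΩclosed he hweak (haΩ j) (hba j) ht hρ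
    -- bound on δ
    have hδ : ‖b j - ybar + (1/(2*((k:ℝ)+1)^3*(‖e‖+1))) • e‖ ≤ 1/((k:ℝ)+1)^3 := by
      have h1 := norm_add_le (b j - ybar) ((1/(2*((k:ℝ)+1)^3*(‖e‖+1))) • e)
      rw [norm_smul, Real.norm_eq_abs, abs_of_pos ht] at h1
      have h2 : (1/(2*((k:ℝ)+1)^3*(‖e‖+1))) * ‖e‖ ≤ 1/(2*((k:ℝ)+1)^3) := by
        rw [div_mul_eq_mul_div, one_mul,
          div_le_div_iff₀ (by positivity) (by positivity)]
        have h3 : (0:ℝ) < ((k:ℝ)+1)^3 := by positivity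
        nlinarith [norm_nonneg e]
      have h4 : 1/(2*((k:ℝ)+1)^3) + 1/(2*((k:ℝ)+1)^3) = 1/((k:ℝ)+1)^3 := by
        field_simp
        norm_num
      linarith
    have hcube : ((k:ℝ)+1) ≤ ((k:ℝ)+1)^3 := by
      nlinarith [mul_nonneg (mul_nonneg (sub_nonneg.mpr hκ) hκ0.le) (by linarith : (0:ℝ) ≤ (k:ℝ)+1+1)]
    have hδ1 : 1/((k:ℝ)+1)^3 ≤ 1 := by
      rw [div_le_one (by positivity)]
      linarith
    -- derived bounds
    have hxk1 : ‖xh - a j‖ ≤ 1/((k:ℝ)+1) :=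
      my_inv_cube hκ (norm_nonneg _) (le_trans hb1 hδ)
    have hyk1 : ‖yh - b j‖ ≤ 1/((k:ℝ)+1) :=
      my_inv_cube hκ (norm_nonneg _) (le_trans hb2 hδ)
    have huh1 : ‖uh - xh‖ ≤ 1 := le_trans (le_trans hb3 hδ) hδ1
    have hfrac1 : 1/((k:ℝ)+1) ≤ 1 := by
      rw [div_le_one hκ0]; exact hκ
    have hP3 : (k:ℝ) ≤ ‖xh‖ := by
      have h1 : ‖a j‖ - ‖xh‖ ≤ ‖xh - a j‖ := by
        rw [norm_sub_rev]; exact norm_sub_norm_le _ _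
      linarith
    have hP4 : (k:ℝ) - 1 ≤ ‖uh‖ := by
      have h1 : ‖xh‖ - ‖uh‖ ≤ ‖uh - xh‖ := by
        rw [norm_sub_rev]; exact norm_sub_norm_le _ _
      linarith
    have hP5 : ‖yh - ybar‖ ≤ 2/((k:ℝ)+1) := by
      have h1 : ‖yh - ybar‖ ≤ ‖yh - b j‖ + ‖b j - ybar‖ := by
        have := norm_add_le (yh - b j) (b j - ybar)
        rw [show (yh - b j) + (b j - ybar) = yh - ybar by abel] at this
        exact this
      have h2 : 1/(2*((k:ℝ)+1)^3) ≤ 1/((k:ℝ)+1) := by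
        rw [div_le_div_iff₀ (by positivity) hκ0]
        nlinarith [hcube]
      have h3 : 1/((k:ℝ)+1) + 1/((k:ℝ)+1) = 2/((k:ℝ)+1) := by ring
      linarith
    have hE1 : ‖ξg.1 + ξΩ‖ ≤ 2/((k:ℝ)+1)^2 := by
      rw [he1]
      calc 2*(1/((k:ℝ)+1))*‖xh - a j‖ ≤ 2*(1/((k:ℝ)+1))*(1/((k:ℝ)+1)) := by
            apply mul_le_mul_of_nonneg_left hxk1 (by positivity)
        _ = 2/((k:ℝ)+1)^2 := by field_simp
    have hE2 : ‖ξg.2 + c‖ ≤ 2/((k:ℝ)+1)^2 := by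
      rw [he2]
      calc 2*(1/((k:ℝ)+1))*‖yh - b j‖ ≤ 2*(1/((k:ℝ)+1))*(1/((k:ℝ)+1)) := by
            apply mul_le_mul_of_nonneg_left hyk1 (by positivity)
        _ = 2/((k:ℝ)+1)^2 := by field_simp
    exact ⟨xh, uh, yh, ξΩ, c, ξg, hP1, hP2, hP3, hP4, hP5, hP6, hP7, hP8, hP9, hE1, hE2⟩
  choose xh uh yh ξΩ c ξg hP1 hP2 hP3 hP4 hP5 hP6 hP7 hP8 hP9 hE1 hE2 using hstage
  -- extract a convergent subsequence of the multipliers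
  have hvb : ∀ k, (ξΩ k, c k) ∈ closedBall (0 : Eucl n × Eucl m) 1 := by
    intro k
    rw [Metric.mem_closedBall, dist_zero_right, Prod.norm_def]
    apply max_le
    · exact my_le_of_sq_le_sq (norm_nonneg _) zero_le_one
        (by nlinarith [sq_nonneg ‖c k‖, hP6 k])
    · exact my_le_of_sq_le_sq (norm_nonneg _) zero_le_one
        (by nlinarith [sq_nonneg ‖ξΩ k‖, hP6 k])
  obtain ⟨l, -, φ, hφmono, hφlim⟩ :=
    (isCompact_closedBall (0 : Eucl n × Eucl m) 1).tendsto_subseq hvb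
  have hplim : Tendsto (fun i => ξΩ (φ i)) atTop (𝓝 l.1) :=
    (continuous_fst.tendsto l).comp hφlim
  have hclim : Tendsto (fun i => c (φ i)) atTop (𝓝 l.2) :=
    (continuous_snd.tendsto l).comp hφlim
  have hφge : ∀ i : ℕ, (i:ℝ) ≤ (φ i : ℝ) := fun i => Nat.cast_le.mpr hφmono.le_apply
  -- the graph multipliers converge to (-l.1, -l.2)
  have hbound1 : ∀ i, ‖(ξg (φ i)).1 + ξΩ (φ i)‖ ≤ 2/((i:ℝ)+1)^2 := by
    intro i
    refine le_trans (hE1 (φ i)) ?_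
    gcongr
    · exact hφmono.le_apply
  have hbound2 : ∀ i, ‖(ξg (φ i)).2 + c (φ i)‖ ≤ 2/((i:ℝ)+1)^2 := by
    intro i
    refine le_trans (hE2 (φ i)) ?_
    gcongr
    · exact hφmono.le_apply
  have hz1 : Tendsto (fun i => (ξg (φ i)).1 + ξΩ (φ i)) atTop (𝓝 0) :=
    squeeze_zero_norm hbound1 my_tendsto_two_div_sq
  have hz2 : Tendsto (fun i => (ξg (φ i)).2 + c (φ i)) atTop (𝓝 0) :=
    squeeze_zero_norm hbound2 my_tendsto_two_div_sq
  have hg1 : Tendsto (fun i => (ξg (φ i)).1) atTop (𝓝 (-l.1)) := by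
    have := hz1.sub hplim
    rw [zero_sub] at this
    exact this.congr (fun i => by abel)
  have hg2 : Tendsto (fun i => (ξg (φ i)).2) atTop (𝓝 (-l.2)) := by
    have := hz2.sub hclim
    rw [zero_sub] at this
    exact this.congr (fun i => by abel)
  have hglim : Tendsto (fun i => ξg (φ i)) atTop (𝓝 (-l.1, -l.2)) := by
    have := hg1.prodMk_nhds hg2
    exact this.congr (fun i => rfl)
  -- membership of l.1 in the normal cone at infinity to Ω
  have hpN : l.1 ∈ normalConeAtInfty1 Ω := by
    refine ⟨fun i => uh (φ i), fun i => ξΩ (φ i), fun i => hP2 _, ?_, fun i => hP8 _, hplim⟩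
    apply tendsto_atTop_mono (fun i => ?_)
      ((tendsto_atTop_add_const_right atTop (-1) tendsto_natCast_atTop_atTop).congr
        (fun i : ℕ => by ring) : Tendsto (fun i : ℕ => (i:ℝ) - 1) atTop atTop)
    have := hP4 (φ i)
    linarith [hφge i]
  -- membership of (-l.1, -l.2) in the normal cone at infinity to the graph
  have hgN : (-l.1, -l.2) ∈ normalConeAtInfty (svGraph S) ybar := by
    refine ⟨fun i => (xh (φ i), yh (φ i)), fun i => ξg (φ i), fun i => hP1 _, ?_, ?_,
      fun i => hP9 _, hglim⟩
    · apply tendsto_atTop_mono (fun i => ?_) tendsto_natCast_atTop_atTop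
      have := hP3 (φ i)
      linarith [hφge i]
    · rw [tendsto_iff_norm_sub_tendsto_zero]
      apply squeeze_zero (fun i => norm_nonneg _) (fun i => ?_) my_tendsto_two_div
      refine le_trans (hP5 (φ i)) ?_
      gcongr
      · exact hφmono.le_apply
  -- positivity on K in the limit
  have hKpos : ∀ y ∈ K, 0 ≤ ⟪l.2, y⟫ := by
    intro y hy
    have ht : Tendsto (fun i => ⟪c (φ i), y⟫) atTop (𝓝 ⟪l.2, y⟫) :=
      hclim.inner tendsto_const_nhds
    exact ge_of_tendsto ht (Eventually.of_forall fun i => hP7 _ y hy)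
  -- norm identity in the limit
  have hone : ‖l.1‖^2 + ‖l.2‖^2 = 1 := by
    have hcont : Tendsto (fun i => ‖ξΩ (φ i)‖^2 + ‖c (φ i)‖^2) atTop
        (𝓝 (‖l.1‖^2 + ‖l.2‖^2)) := ((hplim.norm.pow 2).add (hclim.norm.pow 2))
    exact tendsto_nhds_unique (hcont.congr (fun i => hP6 (φ i))) tendsto_const_nhds
  -- the limit multiplier on K is nonzero (constraint qualification)
  have hc0 : l.2 ≠ 0 := by
    intro h0
    have hmem : -l.1 ∈ coderivAtInfty S ybar 0 ∩ (-(normalConeAtInfty1 Ω)) := by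
      constructor
      · show (-l.1, -(0:Eucl m)) ∈ normalConeAtInfty (svGraph S) ybar
        rw [neg_zero]
        have h' := hgN
        rw [h0, neg_zero] at h'
        exact h'
      · rw [Set.mem_neg, neg_neg]
        exact hpN
    rw [hcq] at hmem
    have hl1 : l.1 = 0 := neg_eq_zero.mp hmem
    rw [hl1, h0] at hone
    simp at hone
  refine ⟨l.2, hc0, hKpos, ?_⟩
  have hmemA : -l.1 ∈ coderivAtInfty S ybar l.2 := hgN
  have := Set.add_mem_add hmemA hpN
  rwa [neg_add_cancel] at this
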